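/- Joint convexity of the exponential collision divergence: For positive semidefinite complex d×d matrices ρ₁, ρ₂, positive definite d×d matrices σ₁, σ₂, and t ∈ [0,1], it holds that Tr[ ( (tσ₁+(1−t)σ₂)^{−1/4} (tρ₁+(1−t)ρ₂) (tσ₁+(1−t)σ₂)^{−1/4} )² ] ≤ t·Tr[ (σ₁^{−1/4} ρ₁ σ₁^{−1/4})² ] + (1−t)·Tr[ (σ₂^{−1/4} ρ₂ σ₂^{−1/4})² ]. -/

import Mathlib

set_option linter.unusedTactic false
set_option linter.unusedSectionVars false
set_option maxHeartbeats 1000000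


open scoped Kronecker ComplexOrder
open MeasureTheory Matrix

noncomputable section

namespace QD

/-! ### Haar measure on the unitary group -/

variable {n : Type*} [Fintype n] [DecidableEq n]

theorem isClosed_unitaryGroup :
    IsClosed ((Matrix.unitaryGroup n ℂ : Set (Matrix n n ℂ))) := by
  have h1 : Continuous fun A : Matrix n n ℂ => star A * A :=
    Continuous.matrix_mul continuous_star continuous_id
  have h2 : Continuous fun A : Matrix n n ℂ => A * star A :=
    Continuous.matrix_mul continuous_id continuous_star
  have heq : (Matrix.unitaryGroup n ℂ : Set (Matrix n n ℂ)) =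
      {A | star A * A = 1} ∩ {A | A * star A = 1} := by
    ext A; exact Iff.rfl
  rw [heq]
  exact (isClosed_eq h1 continuous_const).inter (isClosed_eq h2 continuous_const)

theorem isCompact_unitaryGroup :
    IsCompact ((Matrix.unitaryGroup n ℂ : Set (Matrix n n ℂ))) := by
  have hK : IsCompact {A : Matrix n n ℂ | ∀ i j, A i j ∈ Metric.closedBall (0 : ℂ) 1} := by
    have heq : {A : Matrix n n ℂ | ∀ i j, A i j ∈ Metric.closedBall (0 : ℂ) 1} =
        Set.pi Set.univ fun _ : n => Set.pi Set.univ fun _ : n => Metric.closedBall (0 : ℂ) 1 := by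
      refine Set.eq_of_subset_of_subset ?_ ?_
      · intro A hA
        exact Set.mem_univ_pi.mpr fun i => Set.mem_univ_pi.mpr fun j => hA i j
      · intro A hA i j
        exact Set.mem_univ_pi.mp (Set.mem_univ_pi.mp hA i) j
    rw [heq]
    exact isCompact_univ_pi fun _ => isCompact_univ_pi fun _ => isCompact_closedBall _ _
  refine IsCompact.of_isClosed_subset hK isClosed_unitaryGroup ?_
  intro A hA i j
  simpa [Metric.mem_closedBall, dist_eq_norm] using entry_norm_bound_of_unitary hA i j

instance : CompactSpace (Matrix.unitaryGroup n ℂ) :=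
  isCompact_iff_compactSpace.mp isCompact_unitaryGroup

instance : IsTopologicalGroup (Matrix.unitaryGroup n ℂ) where
  continuous_mul := by
    apply Continuous.subtype_mk
    exact ((continuous_subtype_val.comp continuous_fst).matrix_mul
      (continuous_subtype_val.comp continuous_snd))
  continuous_inv :=
    Continuous.subtype_mk (continuous_star.comp continuous_subtype_val) _

instance : MeasurableSpace (Matrix.unitaryGroup n ℂ) := borel _

instance : BorelSpace (Matrix.unitaryGroup n ℂ) := ⟨rfl⟩

/-- The normalized Haar (probability) measure on the unitary group of `ℂ^n`. -/
def haarU (n : Type*) [Fintype n] [DecidableEq n] : Measure (Matrix.unitaryGroup n ℂ) :=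
  Measure.haarMeasure (⊤ : TopologicalSpace.PositiveCompacts (Matrix.unitaryGroup n ℂ))

/-- Entrywise (Bochner) integral of a matrix-valued function. -/
def matIntegral {G : Type*} [MeasurableSpace G] (μ : Measure G) {m l : Type*}
    (f : G → Matrix m l ℂ) : Matrix m l ℂ :=
  Matrix.of fun i j => ∫ g, f g i j ∂μ

/-! ### Basic matrix-analytic quantities -/

/-- Trace norm `‖X‖₁ = Tr √(XᴴX)`. -/
def traceNorm (X : Matrix n n ℂ) : ℝ :=
  (((Matrix.posSemidef_conjTranspose_mul_self X).1.eigenvectorUnitary : Matrix n n ℂ) *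
    Matrix.diagonal (fun i => ((Real.sqrt
      ((Matrix.posSemidef_conjTranspose_mul_self X).1.eigenvalues i) : ℝ) : ℂ)) *
    (star (Matrix.posSemidef_conjTranspose_mul_self X).1.eigenvectorUnitary : Matrix n n ℂ)).trace.re

/-- Hilbert–Schmidt (Schatten-2) norm `‖X‖₂ = √(Tr[XᴴX])`. -/
def hsNorm (X : Matrix n n ℂ) : ℝ :=
  Real.sqrt ((Xᴴ * X).trace.re)

/-- A density operator: positive semidefinite with unit trace. -/
def IsDensity (ρ : Matrix n n ℂ) : Prop := ρ.PosSemidef ∧ ρ.trace = 1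

/-- Eigenvalues of a matrix (junk value `0` off the Hermitian matrices). -/
def eigvals (H : Matrix n n ℂ) : n → ℝ :=
  if h : H.IsHermitian then h.eigenvalues else 0

/-- Number of distinct eigenvalues `|spec(H)|`. -/
def specCount (H : Matrix n n ℂ) : ℕ := (Finset.univ.image (eigvals H)).card

/-- Spectral projection of a Hermitian matrix onto the eigenspace of `μ`
(junk value `0` off the Hermitian matrices). -/
def eigProj (H : Matrix n n ℂ) (μ : ℝ) : Matrix n n ℂ :=
  if h : H.IsHermitian then
    (h.eigenvectorUnitary : Matrix n n ℂ) *
      Matrix.diagonal (fun i => if h.eigenvalues i = μ then (1 : ℂ) else 0) *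
      (h.eigenvectorUnitary : Matrix n n ℂ)ᴴ
  else 0

/-- The pinching map `P_H[L] = ∑_i e_i L e_i`, the sum running over the spectral
projections `e_i` onto the distinct eigenvalues of `H`. -/
def pinch (H L : Matrix n n ℂ) : Matrix n n ℂ :=
  ∑ μ ∈ Finset.univ.image (eigvals H), eigProj H μ * L * eigProj H μ

/-- The projection `{X ≤ Y}` onto the span of eigenvectors of `Y - X` with nonnegative
eigenvalues. -/
def projLE (X Y : Matrix n n ℂ) : Matrix n n ℂ :=
  if h : (Y - X).IsHermitian then
    (h.eigenvectorUnitary : Matrix n n ℂ) *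
      Matrix.diagonal (fun i => if 0 ≤ h.eigenvalues i then (1 : ℂ) else 0) *
      (h.eigenvectorUnitary : Matrix n n ℂ)ᴴ
  else 0

/-- The projection onto the span of eigenvectors of `H` with positive eigenvalues. -/
def projPos (H : Matrix n n ℂ) : Matrix n n ℂ :=
  if h : H.IsHermitian then
    (h.eigenvectorUnitary : Matrix n n ℂ) *
      Matrix.diagonal (fun i => if 0 < h.eigenvalues i then (1 : ℂ) else 0) *
      (h.eigenvectorUnitary : Matrix n n ℂ)ᴴ
  else 0

/-- Real power of a Hermitian matrix through the spectral decomposition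
(junk value `0` off the Hermitian matrices). -/
def rpow (H : Matrix n n ℂ) (r : ℝ) : Matrix n n ℂ :=
  if h : H.IsHermitian then
    (h.eigenvectorUnitary : Matrix n n ℂ) *
      Matrix.diagonal (fun i => ((h.eigenvalues i ^ r : ℝ) : ℂ)) *
      (h.eigenvectorUnitary : Matrix n n ℂ)ᴴ
  else 0

/-- Matrix logarithm of a Hermitian (positive definite) matrix through the spectral
decomposition (junk value `0` off the Hermitian matrices). -/
def matLog (H : Matrix n n ℂ) : Matrix n n ℂ :=
  if h : H.IsHermitian then
    (h.eigenvectorUnitary : Matrix n n ℂ) *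
      Matrix.diagonal (fun i => ((Real.log (h.eigenvalues i) : ℝ) : ℂ)) *
      (h.eigenvectorUnitary : Matrix n n ℂ)ᴴ
  else 0

/-! ### Divergences -/

/-- `ε`-information-spectrum divergence
`D_s^ε(ρ‖σ) = sup {log c : c > 0, Tr[ρ {ρ ≤ cσ}] ≤ ε}`. -/
def Ds (ε : ℝ) (ρ σ : Matrix n n ℂ) : ℝ :=
  sSup {x : ℝ | ∃ c : ℝ, 0 < c ∧ (ρ * projLE ρ ((c : ℂ) • σ)).trace.re ≤ ε ∧ x = Real.log c}

/-- `ε`-hypothesis-testing divergence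
`D_h^ε(ρ‖σ) = sup {-log Tr[σT] : 0 ≤ T ≤ 1, Tr[ρT] ≥ 1 - ε}`. -/
def Dh (ε : ℝ) (ρ σ : Matrix n n ℂ) : ℝ :=
  sSup {x : ℝ | ∃ T : Matrix n n ℂ, T.PosSemidef ∧ (1 - T).PosSemidef ∧
    1 - ε ≤ (ρ * T).trace.re ∧ x = -Real.log ((σ * T).trace.re)}

/-- `exp D₂*(ρ‖σ) = Tr[(σ^{-1/4} ρ σ^{-1/4})²]`, the exponential of the collision
divergence. -/
def expD2 (ρ σ : Matrix n n ℂ) : ℝ :=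
  ((rpow σ (-(1/4 : ℝ)) * ρ * rpow σ (-(1/4 : ℝ))) ^ 2).trace.re

/-- Quantum relative entropy `D(ρ‖σ) = Tr[ρ(log ρ - log σ)]`. -/
def relEntropy (ρ σ : Matrix n n ℂ) : ℝ :=
  (ρ * (matLog ρ - matLog σ)).trace.re

/-- Quantum relative entropy variance `V(ρ‖σ) = Tr[ρ(log ρ - log σ)²] - D(ρ‖σ)²`. -/
def relVar (ρ σ : Matrix n n ℂ) : ℝ :=
  ((ρ * (matLog ρ - matLog σ) ^ 2).trace.re) - (relEntropy ρ σ) ^ 2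

/-! ### Bipartite notions; the first factor is the `A` system -/

variable {a b e : Type*}

/-- Partial trace over the first tensor factor. -/
def ptraceFst [Fintype a] (X : Matrix (a × b) (a × b) ℂ) : Matrix b b ℂ :=
  Matrix.of fun i j => ∑ x, X (x, i) (x, j)

/-- Partial trace over the `A₁` factor of a tripartite `(A₁ ⊗ C) ⊗ E` system. -/
def ptraceA1 [Fintype a] (X : Matrix ((a × b) × e) ((a × b) × e) ℂ) :
    Matrix (b × e) (b × e) ℂ :=
  Matrix.of fun p q => ∑ x, X ((x, p.1), p.2) ((x, q.1), q.2)

/-- Pinching of a bipartite operator with respect to a state on the second factor: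
`P_{σ} = id ⊗ (pinching w.r.t. σ)`. -/
def pinchSnd [Fintype a] [DecidableEq a] [Fintype b] [DecidableEq b]
    (σ : Matrix b b ℂ) (L : Matrix (a × b) (a × b) ℂ) : Matrix (a × b) (a × b) ℂ :=
  ∑ μ ∈ Finset.univ.image (eigvals σ),
    ((1 : Matrix a a ℂ) ⊗ₖ eigProj σ μ) * L * ((1 : Matrix a a ℂ) ⊗ₖ eigProj σ μ)

/-- Conditional `ε`-hypothesis-testing entropy `H_h^ε(A|B)_ρ = -D_h^ε(ρ_{AB} ‖ 1_A ⊗ ρ_B)`. -/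
def Hh [Fintype a] [DecidableEq a] [Fintype b] [DecidableEq b] (ε : ℝ)
    (ρ : Matrix (a × b) (a × b) ℂ) : ℝ :=
  -(Dh ε ρ ((1 : Matrix a a ℂ) ⊗ₖ ptraceFst ρ))

/-- Conditional entropy `H(A|B)_ρ = -Tr[ρ (log ρ - log (1_A ⊗ ρ_B))]`. -/
def condEntropy [Fintype a] [DecidableEq a] [Fintype b] [DecidableEq b]
    (ρ : Matrix (a × b) (a × b) ℂ) : ℝ :=
  -relEntropy ρ ((1 : Matrix a a ℂ) ⊗ₖ ptraceFst ρ)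

/-- Conditional information variance `V(A|B)_ρ`. -/
def condVar [Fintype a] [DecidableEq a] [Fintype b] [DecidableEq b]
    (ρ : Matrix (a × b) (a × b) ℂ) : ℝ :=
  relVar ρ ((1 : Matrix a a ℂ) ⊗ₖ ptraceFst ρ)

/-- The average decoupling error
`Δ = (1/2) ∫ ‖Tr_{A₁}[(U ⊗ 1_E) ρ (U ⊗ 1_E)†] - (1_C/|C|) ⊗ ρ_E‖₁ dU`,
with respect to the normalized Haar measure, for a state on `(A₁ ⊗ C) ⊗ E`. -/
def decErr {a c e : Type*} [Fintype a] [DecidableEq a] [Fintype c] [DecidableEq c]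
    [Fintype e] [DecidableEq e] (ρ : Matrix ((a × c) × e) ((a × c) × e) ℂ) : ℝ :=
  (1 / 2) * ∫ U : Matrix.unitaryGroup (a × c) ℂ,
    traceNorm
      (ptraceA1 (((U : Matrix (a × c) (a × c) ℂ) ⊗ₖ (1 : Matrix e e ℂ)) * ρ *
          ((U : Matrix (a × c) (a × c) ℂ) ⊗ₖ (1 : Matrix e e ℂ))ᴴ) -
        (((Fintype.card c : ℂ)⁻¹ • (1 : Matrix c c ℂ)) ⊗ₖ ptraceFst ρ))
    ∂(haarU (a × c))

/-! ### Asymptotics -/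

/-- `n`-fold Kronecker tensor power of a matrix. -/
def kronPow {α : Type*} [Fintype α] (ρ : Matrix α α ℂ) (N : ℕ) :
    Matrix (Fin N → α) (Fin N → α) ℂ :=
  Matrix.of fun p q => ∏ i, ρ (p i) (q i)

/-- `n`-fold Kronecker tensor power of a bipartite matrix, regarded as a bipartite
matrix on `A^n ⊗ E^n`. -/
def tensorPow {α β : Type*} [Fintype α] [Fintype β] (ρ : Matrix (α × β) (α × β) ℂ) (N : ℕ) :
    Matrix ((Fin N → α) × (Fin N → β)) ((Fin N → α) × (Fin N → β)) ℂ :=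
  Matrix.of fun p q => ∏ i, ρ (p.1 i, p.2 i) (q.1 i, q.2 i)

/-- The maximal remainder dimension `ℓ^ε(A|E)_ρ`: the largest `dC` dividing `|A|` such
that, for an identification `A ≅ A₁ ⊗ C` with `|C| = dC`, the average decoupling error
is at most `ε`. -/
def maxRemDim {α β : Type*} [Fintype α] [DecidableEq α] [Fintype β] [DecidableEq β]
    (ε : ℝ) (ρ : Matrix (α × β) (α × β) ℂ) : ℕ :=
  sSup {dC : ℕ | dC ∣ Fintype.card α ∧
    ∃ φ : α ≃ Fin (Fintype.card α / dC) × Fin dC,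
      decErr (Matrix.of fun p q => ρ (φ.symm p.1, p.2) (φ.symm q.1, q.2)) ≤ ε}

/-- The inverse of the cumulative distribution function of the standard normal
distribution. -/
def PhiInv (ε : ℝ) : ℝ :=
  sSup {u : ℝ | (∫ t in Set.Iic u, Real.exp (-(t ^ 2) / 2) / Real.sqrt (2 * Real.pi)) ≤ ε}


/-- `1_{A₁} ⊗ Y` : reinsertion of the identity on the `A₁` factor of `(A₁ ⊗ A₂) ⊗ E`. -/
def insertIdFst {a1 a2 e : Type*} [DecidableEq a1] (Y : Matrix (a2 × e) (a2 × e) ℂ) :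
    Matrix ((a1 × a2) × e) ((a1 × a2) × e) ℂ :=
  Matrix.of fun p q => (if p.1.1 = q.1.1 then (1 : ℂ) else 0) * Y (p.1.2, p.2) (q.1.2, q.2)

/-- The swap operator `F = ∑_{i,j} |i⟩⟨j| ⊗ |j⟩⟨i|` on `ℂ^α ⊗ ℂ^α`. -/
def swapOp (α : Type*) [Fintype α] [DecidableEq α] : Matrix (α × α) (α × α) ℂ :=
  ∑ i : α, ∑ j : α, (Matrix.single i j (1 : ℂ)) ⊗ₖ (Matrix.single j i (1 : ℂ))

/-- The operator on `(ℂ^{A₁} ⊗ ℂ^{A₂}) ⊗ (ℂ^{A₁} ⊗ ℂ^{A₂})` acting as the identity on the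
two `A₁` factors and as the swap on the two `A₂` factors. -/
def partialSwapOp (a1 a2 : Type*) [DecidableEq a1] [DecidableEq a2] :
    Matrix ((a1 × a2) × (a1 × a2)) ((a1 × a2) × (a1 × a2)) ℂ :=
  Matrix.of fun p q =>
    if p.1.1 = q.1.1 ∧ p.2.1 = q.2.1 ∧ p.1.2 = q.2.2 ∧ p.2.2 = q.1.2 then (1 : ℂ) else 0

end QD

namespace Matrix.PosSemidef
open scoped MatrixOrder
variable {n : Type*} [Fintype n] [DecidableEq n]

/-- Square root of a positive semidefinite matrix via the spectral decomposition. -/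
def sqrt {A : Matrix n n ℂ} (hA : A.PosSemidef) : Matrix n n ℂ :=
  (hA.1.eigenvectorUnitary : Matrix n n ℂ) *
    diagonal (fun i => ((Real.sqrt (hA.1.eigenvalues i) : ℝ) : ℂ)) *
    (hA.1.eigenvectorUnitary : Matrix n n ℂ)ᴴ

lemma sqrt_eq_cfc {A : Matrix n n ℂ} (hA : A.PosSemidef) : hA.sqrt = CFC.sqrt A := by
  rw [CFC.sqrt_eq_cfc, cfc_nnreal_eq_real _ A, hA.1.cfc_eq]
  simp only [IsHermitian.cfc, Unitary.conjStarAlgAut_apply, sqrt, star_eq_conjTranspose]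
  congr 3
  funext i
  simp [Real.coe_sqrt]
  rw [max_eq_left (hA.eigenvalues_nonneg i)]

lemma posSemidef_sqrt {A : Matrix n n ℂ} (hA : A.PosSemidef) : hA.sqrt.PosSemidef := by
  rw [sqrt_eq_cfc]; exact (CFC.sqrt_nonneg A).posSemidef

lemma sqrt_mul_self {A : Matrix n n ℂ} (hA : A.PosSemidef) : hA.sqrt * hA.sqrt = A := by
  rw [sqrt_eq_cfc]; exact CFC.sqrt_mul_sqrt_self A hA.nonneg

lemma eq_sqrt_of_sq_eq {A B : Matrix n n ℂ} (hA : A.PosSemidef) (hB : B.PosSemidef)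
    (hAB : A ^ 2 = B) : A = hB.sqrt := by
  rw [sqrt_eq_cfc, ← hAB, CFC.sqrt_sq A hA.nonneg]

lemma eq_of_sq_eq_sq {A B : Matrix n n ℂ} (hA : A.PosSemidef) (hB : B.PosSemidef)
    (hAB : A ^ 2 = B ^ 2) : A = B := by
  rw [← CFC.sqrt_sq A hA.nonneg, hAB, CFC.sqrt_sq B hB.nonneg]

end Matrix.PosSemidef

namespace QDAux

variable {n m : Type*} [Fintype n] [DecidableEq n] [Fintype m] [DecidableEq m]

lemma posSemidef_smul {M : Matrix n n ℂ} (hM : M.PosSemidef) {r : ℝ} (hr : 0 ≤ r) :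
    ((r : ℂ) • M).PosSemidef := by
  refine posSemidef_iff_dotProduct_mulVec.mpr ⟨?_, fun x => ?_⟩
  · unfold Matrix.IsHermitian
    rw [conjTranspose_smul, hM.1.eq]
    congr 1
    simp
  · rw [smul_mulVec, dotProduct_smul, smul_eq_mul]
    exact mul_nonneg (by exact_mod_cast Complex.zero_le_real.2 hr) (hM.dotProduct_mulVec_nonneg x)

lemma posDef_smul {M : Matrix n n ℂ} (hM : M.PosDef) {r : ℝ} (hr : 0 < r) :
    ((r : ℂ) • M).PosDef := by
  refine posDef_iff_dotProduct_mulVec.mpr ⟨(posSemidef_smul hM.posSemidef hr.le).1, fun x hx => ?_⟩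
  rw [smul_mulVec, dotProduct_smul, smul_eq_mul]
  exact mul_pos (by exact_mod_cast Complex.zero_lt_real.2 hr) (hM.dotProduct_mulVec_pos hx)

lemma posDef_of_posSemidef_isUnit {M : Matrix n n ℂ} (hM : M.PosSemidef) (hu : IsUnit M) :
    M.PosDef := by
  refine posDef_iff_dotProduct_mulVec.mpr ⟨hM.1, fun x hx => ?_⟩
  rcases (hM.dotProduct_mulVec_nonneg x).lt_or_eq with h | h
  · exact h
  · exfalso
    apply hx
    have h0 : M *ᵥ x = 0 := (hM.dotProduct_mulVec_zero_iff x).mp h.symm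
    have hinj := (Matrix.mulVec_injective_iff_isUnit).mpr hu
    have : M *ᵥ x = M *ᵥ 0 := by rw [h0, Matrix.mulVec_zero]
    exact hinj this

lemma conjTranspose_kronecker (A : Matrix n n ℂ) (B : Matrix m m ℂ) :
    (A ⊗ₖ B)ᴴ = Aᴴ ⊗ₖ Bᴴ := by
  ext ⟨i, j⟩ ⟨k, l⟩
  simp [conjTranspose_apply, kroneckerMap_apply, mul_comm]

lemma posSemidef_kronecker {A : Matrix n n ℂ} {B : Matrix m m ℂ}
    (hA : A.PosSemidef) (hB : B.PosSemidef) : (A ⊗ₖ B).PosSemidef := by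
  exact hA.kronecker hB

lemma posDef_kronecker {A : Matrix n n ℂ} {B : Matrix m m ℂ}
    (hA : A.PosDef) (hB : B.PosDef) : (A ⊗ₖ B).PosDef := by
  refine posDef_of_posSemidef_isUnit (posSemidef_kronecker hA.posSemidef hB.posSemidef) ?_
  have h1 : (A ⊗ₖ B) * (A⁻¹ ⊗ₖ B⁻¹) = 1 := by
    rw [← Matrix.mul_kronecker_mul,
      Matrix.mul_nonsing_inv _ (Matrix.isUnit_iff_isUnit_det _ |>.mp hA.isUnit),
      Matrix.mul_nonsing_inv _ (Matrix.isUnit_iff_isUnit_det _ |>.mp hB.isUnit),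
      Matrix.one_kronecker_one]
  rw [Matrix.isUnit_iff_isUnit_det]
  refine IsUnit.of_mul_eq_one (A⁻¹ ⊗ₖ B⁻¹).det ?_
  rw [← Matrix.det_mul, h1, Matrix.det_one]

lemma conj_key {U : Matrix n n ℂ} (hU : Uᴴ * U = 1) (M : Matrix n n ℂ) :
    Uᴴ * (U * M * Uᴴ) * U = M := by
  rw [Matrix.mul_assoc U M, ← Matrix.mul_assoc Uᴴ U, hU, Matrix.one_mul,
    Matrix.mul_assoc, hU, Matrix.mul_one]

lemma conj_key' {U : Matrix n n ℂ} (hU : U * Uᴴ = 1) (M : Matrix n n ℂ) :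
    U * (Uᴴ * M * U) * Uᴴ = M := by
  rw [Matrix.mul_assoc Uᴴ M, ← Matrix.mul_assoc U Uᴴ, hU, Matrix.one_mul,
    Matrix.mul_assoc, hU, Matrix.mul_one]

lemma conj_mul {U : Matrix n n ℂ} (hU : Uᴴ * U = 1) (M N : Matrix n n ℂ) :
    (U * M * Uᴴ) * (U * N * Uᴴ) = U * (M * N) * Uᴴ := by
  have h : ∀ X : Matrix n n ℂ, Uᴴ * (U * X) = X := fun X => by
    rw [← Matrix.mul_assoc, hU, Matrix.one_mul]
  simp only [Matrix.mul_assoc, h]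

lemma conj_inj {U : Matrix n n ℂ} (hU : Uᴴ * U = 1) {M N : Matrix n n ℂ}
    (h : U * M * Uᴴ = U * N * Uᴴ) : M = N := by
  rw [← conj_key hU M, h, conj_key hU]

lemma diagonal_commute_lift {X : Matrix n n ℂ} {d e : n → ℝ}
    (hde : ∀ i j : n, d i = d j → e i = e j)
    (h : diagonal (fun i => (d i : ℂ)) * X = X * diagonal (fun i => (d i : ℂ))) :
    diagonal (fun i => (e i : ℂ)) * X = X * diagonal (fun i => (e i : ℂ)) := by
  ext i j
  have h' : (d i : ℂ) * X i j = X i j * (d j : ℂ) := by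
    have := congrArg (fun M => M i j) h
    simpa [Matrix.diagonal_mul, Matrix.mul_diagonal] using this
  rw [Matrix.diagonal_mul, Matrix.mul_diagonal]
  rcases eq_or_ne (d i) (d j) with hd | hd
  · rw [hde i j hd]; ring
  · have hX : X i j = 0 := by
      have hne : (d i : ℂ) - (d j : ℂ) ≠ 0 := by
        rw [sub_ne_zero]
        exact_mod_cast hd
      have : ((d i : ℂ) - (d j : ℂ)) * X i j = 0 := by
        rw [sub_mul, h', mul_comm]; ring
      exact (mul_eq_zero.mp this).resolve_left hne
    simp [hX]

section spectral

variable {A : Matrix n n ℂ} (hA : A.IsHermitian)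

lemma star_unit : (hA.eigenvectorUnitary : Matrix n n ℂ)ᴴ *
    (hA.eigenvectorUnitary : Matrix n n ℂ) = 1 := by
  rw [← Matrix.star_eq_conjTranspose]
  exact Unitary.coe_star_mul_self hA.eigenvectorUnitary

lemma unit_star : (hA.eigenvectorUnitary : Matrix n n ℂ) *
    (hA.eigenvectorUnitary : Matrix n n ℂ)ᴴ = 1 := by
  rw [← Matrix.star_eq_conjTranspose]
  exact Unitary.coe_mul_star_self hA.eigenvectorUnitary

lemma spectral' : A = (hA.eigenvectorUnitary : Matrix n n ℂ) *
    diagonal (fun i => ((hA.eigenvalues i : ℝ) : ℂ)) *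
    (hA.eigenvectorUnitary : Matrix n n ℂ)ᴴ := by
  conv_lhs => rw [hA.spectral_theorem]
  simp only [Unitary.conjStarAlgAut_apply, star_eq_conjTranspose]
  rfl

lemma conj_diag_isHermitian (f : n → ℝ) :
    ((hA.eigenvectorUnitary : Matrix n n ℂ) * diagonal (fun i => ((f i : ℝ) : ℂ)) *
      (hA.eigenvectorUnitary : Matrix n n ℂ)ᴴ).IsHermitian := by
  have hd : (diagonal (fun i => ((f i : ℝ) : ℂ))).IsHermitian := by
    have hst : (star fun i => ((f i : ℝ) : ℂ)) = fun i => ((f i : ℝ) : ℂ) :=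
      funext fun i => Complex.conj_ofReal _
    rw [Matrix.IsHermitian, diagonal_conjTranspose, hst]
  exact Matrix.isHermitian_mul_mul_conjTranspose _ hd

lemma conj_diag_posSemidef {f : n → ℝ} (hf : ∀ i, 0 ≤ f i) :
    ((hA.eigenvectorUnitary : Matrix n n ℂ) * diagonal (fun i => ((f i : ℝ) : ℂ)) *
      (hA.eigenvectorUnitary : Matrix n n ℂ)ᴴ).PosSemidef := by
  have hd : (diagonal (fun i => ((f i : ℝ) : ℂ))).PosSemidef :=
    Matrix.PosSemidef.diagonal fun i => by simpa using Complex.zero_le_real.2 (hf i)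
  exact hd.mul_mul_conjTranspose_same _

end spectral

lemma commute_sqrt {A B : Matrix n n ℂ} (hA : A.PosSemidef) (hAB : A * B = B * A) :
    hA.sqrt * B = B * hA.sqrt := by
  set U : Matrix n n ℂ := (hA.1.eigenvectorUnitary : Matrix n n ℂ) with hUdef
  have hU1 : U * Uᴴ = 1 := unit_star hA.1
  have hU2 : Uᴴ * U = 1 := star_unit hA.1
  set X : Matrix n n ℂ := Uᴴ * B * U with hXdef
  have hB : B = U * X * Uᴴ := (conj_key' hU1 B).symm
  have hspec : A = U * diagonal (fun i => ((hA.1.eigenvalues i : ℝ) : ℂ)) * Uᴴ := spectral' hA.1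
  have hcomm1 :
      (U * diagonal (fun i => ((hA.1.eigenvalues i : ℝ) : ℂ)) * Uᴴ) * (U * X * Uᴴ)
        = (U * X * Uᴴ) * (U * diagonal (fun i => ((hA.1.eigenvalues i : ℝ) : ℂ)) * Uᴴ) := by
    rw [← hspec, ← hB]; exact hAB
  rw [conj_mul hU2, conj_mul hU2] at hcomm1
  have hDX := conj_inj hU2 hcomm1
  have hEX : diagonal (fun i => ((Real.sqrt (hA.1.eigenvalues i) : ℝ) : ℂ)) * X
      = X * diagonal (fun i => ((Real.sqrt (hA.1.eigenvalues i) : ℝ) : ℂ)) :=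
    diagonal_commute_lift (fun i j hij => by rw [hij]) hDX
  have hsqrt : hA.sqrt
      = U * diagonal (fun i => ((Real.sqrt (hA.1.eigenvalues i) : ℝ) : ℂ)) * Uᴴ := rfl
  rw [hsqrt, hB, conj_mul hU2, conj_mul hU2, hEX]

end QDAux

namespace QDAuxB
open QDAux

variable {n : Type*} [Fintype n] [DecidableEq n]

lemma posSemidef_mul_of_commute {A B : Matrix n n ℂ} (hA : A.PosSemidef) (hB : B.PosSemidef)
    (h : A * B = B * A) : (A * B).PosSemidef := by
  have h1 : hA.sqrt * B = B * hA.sqrt := commute_sqrt hA h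
  have h2 : A * B = hA.sqrt ᴴ * B * hA.sqrt := by
    rw [hA.posSemidef_sqrt.1.eq]
    calc A * B = (hA.sqrt * hA.sqrt) * B := by rw [hA.sqrt_mul_self]
    _ = hA.sqrt * (hA.sqrt * B) := by rw [Matrix.mul_assoc]
    _ = hA.sqrt * (B * hA.sqrt) := by rw [h1]
    _ = hA.sqrt * B * hA.sqrt := by rw [Matrix.mul_assoc]
  rw [h2]
  exact hB.conjTranspose_mul_mul_same _

lemma posDef_sqrt {A : Matrix n n ℂ} (hA : A.PosDef) : (hA.posSemidef.sqrt).PosDef := by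
  refine posDef_of_posSemidef_isUnit hA.posSemidef.posSemidef_sqrt ?_
  rw [Matrix.isUnit_iff_isUnit_det]
  have hdet : hA.posSemidef.sqrt.det * hA.posSemidef.sqrt.det = A.det := by
    rw [← Matrix.det_mul, hA.posSemidef.sqrt_mul_self]
  rw [isUnit_iff_ne_zero]
  intro h0
  rw [h0, mul_zero] at hdet
  exact hA.det_pos.ne' hdet.symm

/-- monotonicity of the matrix square root -/
lemma sqrt_mono {A B : Matrix n n ℂ} (hA : A.PosSemidef) (hB : B.PosSemidef)
    (hAB : (B - A).PosSemidef) : (hB.sqrt - hA.sqrt).PosSemidef := by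
  set P := hA.sqrt with hPdef
  set Q := hB.sqrt with hQdef
  have hX : (Q - P).IsHermitian := hB.posSemidef_sqrt.1.sub hA.posSemidef_sqrt.1
  refine hX.posSemidef_iff_eigenvalues_nonneg.mpr fun i => ?_
  by_contra hneg
  push_neg at hneg
  set μ : ℝ := hX.eigenvalues i with hμ
  set v : n → ℂ := ⇑(hX.eigenvectorBasis i) with hv
  have hv0 : v ≠ 0 := by
    intro h0
    have := hX.eigenvectorBasis.orthonormal.ne_zero i
    apply this
    ext j
    exact congrFun h0 j
  have hvec : (Q - P) *ᵥ v = (μ : ℂ) • v := by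
    have h := hX.mulVec_eigenvectorBasis i
    rw [RCLike.real_smul_eq_coe_smul (K := ℂ)] at h
    exact h
  -- B - A = Q * (Q - P) + (Q - P) * P
  have hQQ : Q * Q = B := hB.sqrt_mul_self
  have hPP : P * P = A := hA.sqrt_mul_self
  have hdecomp : B - A = Q * (Q - P) + (Q - P) * P := by
    rw [Matrix.mul_sub, Matrix.sub_mul, hQQ, hPP]
    abel
  have h1 : 0 ≤ star v ⬝ᵥ ((B - A) *ᵥ v) := hAB.dotProduct_mulVec_nonneg v
  have e1 : star v ⬝ᵥ ((B - A) *ᵥ v)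
      = star v ⬝ᵥ ((Q * (Q - P)) *ᵥ v) + star v ⬝ᵥ (((Q - P) * P) *ᵥ v) := by
    rw [hdecomp, Matrix.add_mulVec, dotProduct_add]
  have e2 : star v ⬝ᵥ ((Q * (Q - P)) *ᵥ v) = (μ : ℂ) * (star v ⬝ᵥ (Q *ᵥ v)) := by
    rw [← Matrix.mulVec_mulVec, hvec, Matrix.mulVec_smul, dotProduct_smul, smul_eq_mul]
  have hrow : star v ᵥ* (Q - P) = star ((Q - P) *ᵥ v) := by
    rw [star_mulVec, hX.eq]
  have e3 : star v ⬝ᵥ (((Q - P) * P) *ᵥ v) = (μ : ℂ) * (star v ⬝ᵥ (P *ᵥ v)) := by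
    rw [← Matrix.mulVec_mulVec, dotProduct_mulVec, hrow, hvec]
    rw [star_smul, smul_dotProduct]
    simp [smul_eq_mul, Complex.conj_ofReal]
  set qQ : ℂ := star v ⬝ᵥ (Q *ᵥ v) with hqQ
  set qP : ℂ := star v ⬝ᵥ (P *ᵥ v) with hqP
  have hQ0 : 0 ≤ qQ := hB.posSemidef_sqrt.dotProduct_mulVec_nonneg v
  have hP0 : 0 ≤ qP := hA.posSemidef_sqrt.dotProduct_mulVec_nonneg v
  have hμC : (μ : ℂ) < 0 := by exact_mod_cast Complex.real_lt_real.2 hneg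
  have hsum : 0 ≤ (μ : ℂ) * (qQ + qP) := by
    calc (0:ℂ) ≤ star v ⬝ᵥ ((B - A) *ᵥ v) := h1
    _ = (μ : ℂ) * (qQ + qP) := by rw [e1, e2, e3, mul_add]
  have hsnn : 0 ≤ qQ + qP := add_nonneg hQ0 hP0
  have hzero : qQ + qP = 0 := by
    by_contra hne
    have hpos : 0 < qQ + qP := lt_of_le_of_ne hsnn (Ne.symm hne)
    have : (μ : ℂ) * (qQ + qP) < 0 := mul_neg_of_neg_of_pos hμC hpos
    exact absurd (lt_of_le_of_lt hsum this) (lt_irrefl 0)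
  have hqQ0 : qQ = 0 := le_antisymm (by calc qQ ≤ qQ + qP := le_add_of_nonneg_right hP0
                                          _ = 0 := hzero) hQ0
  have hqP0 : qP = 0 := by
    have := hzero
    rw [hqQ0, zero_add] at this
    exact this
  have hQv : Q *ᵥ v = 0 := (hB.posSemidef_sqrt.dotProduct_mulVec_zero_iff v).mp hqQ0
  have hPv : P *ᵥ v = 0 := (hA.posSemidef_sqrt.dotProduct_mulVec_zero_iff v).mp hqP0
  have : ((μ : ℂ)) • v = 0 := by
    rw [← hvec, Matrix.sub_mulVec, hQv, hPv, sub_zero]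
  rcases smul_eq_zero.mp this with hμ0 | hv0'
  · exact hμC.ne hμ0
  · exact hv0 hv0'

end QDAuxB

namespace QDAuxC
open QDAux QDAuxB

variable {n : Type*} [Fintype n] [DecidableEq n]

lemma le_sqrt_sq {Z : Matrix n n ℂ} (hZ : Z.IsHermitian) (hZ2 : (Z ^ 2).PosSemidef) :
    (hZ2.sqrt - Z).PosSemidef := by
  set U : Matrix n n ℂ := (hZ.eigenvectorUnitary : Matrix n n ℂ) with hU
  set d : n → ℝ := hZ.eigenvalues with hd
  have hU2 : Uᴴ * U = 1 := star_unit hZ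
  have hspec : Z = U * diagonal (fun i => ((d i : ℝ) : ℂ)) * Uᴴ := spectral' hZ
  set P : Matrix n n ℂ := U * diagonal (fun i => ((|d i| : ℝ) : ℂ)) * Uᴴ with hPdef
  have hP : P.PosSemidef := conj_diag_posSemidef hZ fun i => abs_nonneg _
  have hPsq : P ^ 2 = Z ^ 2 := by
    rw [pow_two, pow_two, hPdef, conj_mul hU2]
    conv_rhs => rw [hspec]
    rw [conj_mul hU2, diagonal_mul_diagonal, diagonal_mul_diagonal]
    have habs : (fun i => ((|d i| : ℝ) : ℂ) * ((|d i| : ℝ) : ℂ))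
        = fun i => ((d i : ℝ) : ℂ) * ((d i : ℝ) : ℂ) := by
      funext i
      exact_mod_cast congrArg Complex.ofReal (abs_mul_abs_self (d i))
    rw [habs]
  have hPs : P = hZ2.sqrt := hP.eq_sqrt_of_sq_eq hZ2 hPsq
  rw [← hPs]
  have hsub : P - Z = U * diagonal (fun i => ((|d i| - d i : ℝ) : ℂ)) * Uᴴ := by
    have hdiag : diagonal (fun i => ((|d i| - d i : ℝ) : ℂ))
        = diagonal (fun i => ((|d i| : ℝ) : ℂ)) - diagonal (fun i => ((d i : ℝ) : ℂ)) := by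
      rw [diagonal_sub]
      congr 1
      funext i
      push_cast
      ring
    rw [hdiag, Matrix.mul_sub, Matrix.sub_mul, ← hspec, ← hPdef]
  rw [hsub]
  exact conj_diag_posSemidef hZ fun i => sub_nonneg.2 (le_abs_self _)

lemma diag_re_nonneg {M : Matrix n n ℂ} (hM : M.PosSemidef) (i : n) : 0 ≤ (M i i).re := by
  have h2 := hM.dotProduct_mulVec_nonneg (Pi.single i 1)
  have heq : star (Pi.single i 1 : n → ℂ) ⬝ᵥ (M *ᵥ Pi.single i 1) = M i i := by
    simp [Matrix.mulVec_single, dotProduct, Pi.single_apply]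
  rw [heq] at h2
  simpa using (Complex.le_def.mp h2).1

lemma trace_re_nonneg {M : Matrix n n ℂ} (hM : M.PosSemidef) : 0 ≤ M.trace.re := by
  rw [Matrix.trace, Complex.re_sum]
  exact Finset.sum_nonneg fun i _ => diag_re_nonneg hM i

end QDAuxC

namespace QDAuxD
open QDAux QDAuxB QDAuxC

variable {N : Type*} [Fintype N] [DecidableEq N]

/-- The half block matrix [[T, G],[G, S]] is PSD when G = sqrt T * sqrt S with everything
commuting. -/
lemma block_psd {T S : Matrix N N ℂ} (hT : T.PosSemidef) (hS : S.PosSemidef)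
    (hTS : T * S = S * T) :
    (Matrix.fromBlocks T (hT.sqrt * hS.sqrt) (hT.sqrt * hS.sqrt) S).PosSemidef := by
  set P := hT.sqrt with hP
  set Q := hS.sqrt with hQ
  -- P commutes with S, hence with Q
  have h1 : P * S = S * P := commute_sqrt hT hTS
  have h2 : Q * P = P * Q := commute_sqrt hS h1.symm
  have hM : Matrix.fromBlocks T (P * Q) (P * Q) S
      = (Matrix.fromBlocks P Q 0 0)ᴴ * (Matrix.fromBlocks P Q 0 0) := by
    rw [Matrix.fromBlocks_conjTranspose, Matrix.fromBlocks_multiply]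
    simp only [Matrix.conjTranspose_zero, Matrix.zero_mul, Matrix.mul_zero, add_zero,
      hT.posSemidef_sqrt.1.eq, hS.posSemidef_sqrt.1.eq]
    rw [show Pᴴ = P from hT.posSemidef_sqrt.1.eq, show Qᴴ = Q from hS.posSemidef_sqrt.1.eq,
      show P * P = T from hT.sqrt_mul_self, show Q * Q = S from hS.sqrt_mul_self, h2]
  rw [hM]
  exact posSemidef_conjTranspose_mul_self _

/-- Ando's argument: joint concavity of the (commuting-pair) geometric mean. -/
lemma ando_key {T₁ T₂ S₁ S₂ : Matrix N N ℂ}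
    (hT₁ : T₁.PosSemidef) (hT₂ : T₂.PosSemidef) (hS₁ : S₁.PosSemidef) (hS₂ : S₂.PosSemidef)
    (h11 : T₁ * S₁ = S₁ * T₁) (h22 : T₂ * S₂ = S₂ * T₂)
    {t : ℝ} (ht0 : 0 ≤ t) (ht1 : t ≤ 1)
    (hT : ((t : ℂ) • T₁ + ((1 - t : ℝ) : ℂ) • T₂).PosDef)
    {G G₁ G₂ : Matrix N N ℂ} (hG : G.PosSemidef) (hG₁ : G₁.PosSemidef) (hG₂ : G₂.PosSemidef)
    (hTS : ((t : ℂ) • T₁ + ((1 - t : ℝ) : ℂ) • T₂) * ((t : ℂ) • S₁ + ((1 - t : ℝ) : ℂ) • S₂)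
      = ((t : ℂ) • S₁ + ((1 - t : ℝ) : ℂ) • S₂) * ((t : ℂ) • T₁ + ((1 - t : ℝ) : ℂ) • T₂))
    (hGsq : G ^ 2 = ((t : ℂ) • T₁ + ((1 - t : ℝ) : ℂ) • T₂) *
      ((t : ℂ) • S₁ + ((1 - t : ℝ) : ℂ) • S₂))
    (hG₁sq : G₁ ^ 2 = T₁ * S₁) (hG₂sq : G₂ ^ 2 = T₂ * S₂) :
    (G - ((t : ℂ) • G₁ + ((1 - t : ℝ) : ℂ) • G₂)).PosSemidef := by
  set T := (t : ℂ) • T₁ + ((1 - t : ℝ) : ℂ) • T₂ with hTdef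
  set S := (t : ℂ) • S₁ + ((1 - t : ℝ) : ℂ) • S₂ with hSdef
  have hS : S.PosSemidef :=
    (posSemidef_smul hS₁ ht0).add (posSemidef_smul hS₂ (by linarith))
  have hTpsd : T.PosSemidef := hT.posSemidef
  -- identifications G = sqrt T * sqrt S etc.
  have hGid : G = hTpsd.sqrt * hS.sqrt := by
    have h1 : hTpsd.sqrt * S = S * hTpsd.sqrt := commute_sqrt hTpsd hTS
    have h2 : hS.sqrt * hTpsd.sqrt = hTpsd.sqrt * hS.sqrt := commute_sqrt hS h1.symm
    have hpsd : (hTpsd.sqrt * hS.sqrt).PosSemidef := by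
      have := posSemidef_mul_of_commute hTpsd.posSemidef_sqrt hS.posSemidef_sqrt h2.symm
      exact this
    have hsq : (hTpsd.sqrt * hS.sqrt) ^ 2 = G ^ 2 := by
      rw [hGsq, pow_two]
      calc hTpsd.sqrt * hS.sqrt * (hTpsd.sqrt * hS.sqrt)
          = hTpsd.sqrt * (hS.sqrt * hTpsd.sqrt) * hS.sqrt := by
            simp only [Matrix.mul_assoc]
        _ = hTpsd.sqrt * (hTpsd.sqrt * hS.sqrt) * hS.sqrt := by rw [h2]
        _ = (hTpsd.sqrt * hTpsd.sqrt) * (hS.sqrt * hS.sqrt) := by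
            simp only [Matrix.mul_assoc]
        _ = T * S := by rw [hTpsd.sqrt_mul_self, hS.sqrt_mul_self]
    exact (hpsd.eq_of_sq_eq_sq hG hsq).symm
  have hG₁id : G₁ = hT₁.sqrt * hS₁.sqrt := by
    have h1 : hT₁.sqrt * S₁ = S₁ * hT₁.sqrt := commute_sqrt hT₁ h11
    have h2 : hS₁.sqrt * hT₁.sqrt = hT₁.sqrt * hS₁.sqrt := commute_sqrt hS₁ h1.symm
    have hpsd := posSemidef_mul_of_commute hT₁.posSemidef_sqrt hS₁.posSemidef_sqrt h2.symm
    have hsq : (hT₁.sqrt * hS₁.sqrt) ^ 2 = G₁ ^ 2 := by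
      rw [hG₁sq, pow_two]
      calc hT₁.sqrt * hS₁.sqrt * (hT₁.sqrt * hS₁.sqrt)
          = hT₁.sqrt * (hS₁.sqrt * hT₁.sqrt) * hS₁.sqrt := by simp only [Matrix.mul_assoc]
        _ = hT₁.sqrt * (hT₁.sqrt * hS₁.sqrt) * hS₁.sqrt := by rw [h2]
        _ = (hT₁.sqrt * hT₁.sqrt) * (hS₁.sqrt * hS₁.sqrt) := by simp only [Matrix.mul_assoc]
        _ = T₁ * S₁ := by rw [hT₁.sqrt_mul_self, hS₁.sqrt_mul_self]
    exact (hpsd.eq_of_sq_eq_sq hG₁ hsq).symm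
  have hG₂id : G₂ = hT₂.sqrt * hS₂.sqrt := by
    have h1 : hT₂.sqrt * S₂ = S₂ * hT₂.sqrt := commute_sqrt hT₂ h22
    have h2 : hS₂.sqrt * hT₂.sqrt = hT₂.sqrt * hS₂.sqrt := commute_sqrt hS₂ h1.symm
    have hpsd := posSemidef_mul_of_commute hT₂.posSemidef_sqrt hS₂.posSemidef_sqrt h2.symm
    have hsq : (hT₂.sqrt * hS₂.sqrt) ^ 2 = G₂ ^ 2 := by
      rw [hG₂sq, pow_two]
      calc hT₂.sqrt * hS₂.sqrt * (hT₂.sqrt * hS₂.sqrt)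
          = hT₂.sqrt * (hS₂.sqrt * hT₂.sqrt) * hS₂.sqrt := by simp only [Matrix.mul_assoc]
        _ = hT₂.sqrt * (hT₂.sqrt * hS₂.sqrt) * hS₂.sqrt := by rw [h2]
        _ = (hT₂.sqrt * hT₂.sqrt) * (hS₂.sqrt * hS₂.sqrt) := by simp only [Matrix.mul_assoc]
        _ = T₂ * S₂ := by rw [hT₂.sqrt_mul_self, hS₂.sqrt_mul_self]
    exact (hpsd.eq_of_sq_eq_sq hG₂ hsq).symm
  set X : Matrix N N ℂ := (t : ℂ) • G₁ + ((1 - t : ℝ) : ℂ) • G₂ with hXdef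
  have hXpsd : X.PosSemidef :=
    (posSemidef_smul hG₁ ht0).add (posSemidef_smul hG₂ (by linarith))
  have hXherm : X.IsHermitian := hXpsd.1
  have hblock1 : (Matrix.fromBlocks T₁ G₁ G₁ S₁).PosSemidef := by
    rw [hG₁id]; exact block_psd hT₁ hS₁ h11
  have hblock2 : (Matrix.fromBlocks T₂ G₂ G₂ S₂).PosSemidef := by
    rw [hG₂id]; exact block_psd hT₂ hS₂ h22
  have hblockX : (Matrix.fromBlocks T X X S).PosSemidef := by
    have hbeq : Matrix.fromBlocks T X X S
        = (t : ℂ) • Matrix.fromBlocks T₁ G₁ G₁ S₁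
          + ((1 - t : ℝ) : ℂ) • Matrix.fromBlocks T₂ G₂ G₂ S₂ := by
      rw [Matrix.fromBlocks_smul, Matrix.fromBlocks_smul, Matrix.fromBlocks_add]
    rw [hbeq]
    exact (posSemidef_smul hblock1 ht0).add (posSemidef_smul hblock2 (by linarith))
  haveI : Invertible T := T.invertibleOfIsUnitDet ((Matrix.isUnit_iff_isUnit_det T).mp hT.isUnit)
  have hSchur : (S - X * T⁻¹ * X).PosSemidef := by
    have hb : (Matrix.fromBlocks T X Xᴴ S).PosSemidef := by rw [hXherm.eq]; exact hblockX
    have h := (Matrix.PosDef.fromBlocks₁₁ X S hT).mp hb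
    rwa [hXherm.eq] at h
  set P : Matrix N N ℂ := hTpsd.sqrt with hPdef
  have hPposdef : P.PosDef := posDef_sqrt hT
  haveI : Invertible P := P.invertibleOfIsUnitDet
    ((Matrix.isUnit_iff_isUnit_det P).mp hPposdef.isUnit)
  set Pi : Matrix N N ℂ := P⁻¹ with hPidef
  have hPinv : Pi.PosDef := hPposdef.inv
  have hPP : P * P = T := hTpsd.sqrt_mul_self
  have hPPi : P * Pi = 1 := Matrix.mul_inv_of_invertible P
  have hPiP : Pi * P = 1 := Matrix.inv_mul_of_invertible P
  have hPiHerm : Pi.IsHermitian := hPinv.1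
  have hTinv : T⁻¹ = Pi * Pi := by
    rw [← hPP, Matrix.mul_inv_rev]
  set Q : Matrix N N ℂ := hS.sqrt with hQdef
  have hQpsd : Q.PosSemidef := hS.posSemidef_sqrt
  have hPS : P * S = S * P := commute_sqrt hTpsd hTS
  have hQP : Q * P = P * Q := commute_sqrt hS hPS.symm
  have hPiQ : Pi * Q = Q * Pi := by
    have h1 : Pi * (P * Q) * Pi = Pi * (Q * P) * Pi := by rw [hQP]
    calc Pi * Q = Pi * Q * (P * Pi) := by rw [hPPi, Matrix.mul_one]
      _ = Pi * (Q * P) * Pi := by simp only [Matrix.mul_assoc]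
      _ = Pi * (P * Q) * Pi := by rw [hQP]
      _ = (Pi * P) * (Q * Pi) := by simp only [Matrix.mul_assoc]
      _ = Q * Pi := by rw [hPiP, Matrix.one_mul]
  have hPiS : Pi * S = S * Pi := by
    calc Pi * S = Pi * S * (P * Pi) := by rw [hPPi, Matrix.mul_one]
      _ = Pi * (S * P) * Pi := by simp only [Matrix.mul_assoc]
      _ = Pi * (P * S) * Pi := by rw [hPS]
      _ = (Pi * P) * (S * Pi) := by simp only [Matrix.mul_assoc]
      _ = S * Pi := by rw [hPiP, Matrix.one_mul]
  set W : Matrix N N ℂ := Pi * X * Pi with hWdef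
  have hWherm : W.IsHermitian := by
    have h := Matrix.isHermitian_mul_mul_conjTranspose Pi hXherm
    rwa [hPiHerm.eq] at h
  have hW2psd : (W ^ 2).PosSemidef := by
    have h := posSemidef_conjTranspose_mul_self W
    rw [hWherm.eq] at h
    rwa [pow_two]
  have hCpsd : (Pi * S * Pi).PosSemidef := by
    have h := hS.conjTranspose_mul_mul_same Pi
    rwa [hPiHerm.eq] at h
  have hW2C : (Pi * S * Pi - W ^ 2).PosSemidef := by
    have h := hSchur.conjTranspose_mul_mul_same Pi
    rw [hPiHerm.eq] at h
    have heq : Pi * (S - X * T⁻¹ * X) * Pi = Pi * S * Pi - W ^ 2 := by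
      rw [Matrix.mul_sub, Matrix.sub_mul, hTinv, pow_two, hWdef]
      congr 1
      simp only [Matrix.mul_assoc]
    rwa [heq] at h
  have m1 : (hCpsd.sqrt - hW2psd.sqrt).PosSemidef := sqrt_mono hW2psd hCpsd hW2C
  have m2 : (hW2psd.sqrt - W).PosSemidef := le_sqrt_sq hWherm hW2psd
  have mW : (hCpsd.sqrt - W).PosSemidef := by
    have h := m1.add m2
    rwa [sub_add_sub_cancel] at h
  have hPiQpsd : (Pi * Q).PosSemidef := posSemidef_mul_of_commute hPinv.posSemidef hQpsd hPiQ
  have hPiQsq : (Pi * Q) ^ 2 = Pi * S * Pi := by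
    have hQQ : Q * Q = S := hS.sqrt_mul_self
    calc (Pi * Q) ^ 2 = Pi * (Q * Pi) * Q := by rw [pow_two]; simp only [Matrix.mul_assoc]
      _ = Pi * (Pi * Q) * Q := by rw [hPiQ]
      _ = Pi * Pi * (Q * Q) := by simp only [Matrix.mul_assoc]
      _ = Pi * Pi * S := by rw [hQQ]
      _ = Pi * (Pi * S) := by simp only [Matrix.mul_assoc]
      _ = Pi * (S * Pi) := by rw [hPiS]
      _ = Pi * S * Pi := by simp only [Matrix.mul_assoc]
  have hCid : Pi * Q = hCpsd.sqrt := hPiQpsd.eq_sqrt_of_sq_eq hCpsd hPiQsq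
  have final : G - X = P * (hCpsd.sqrt - W) * P := by
    rw [← hCid, hWdef, Matrix.mul_sub, Matrix.sub_mul]
    refine congrArg₂ HSub.hSub ?_ ?_
    · calc G = P * Q := hGid
        _ = (P * Pi) * (Q * P) := by rw [hPPi, Matrix.one_mul, hQP]
        _ = P * (Pi * Q) * P := by simp only [Matrix.mul_assoc]
    · calc X = 1 * X * 1 := by rw [Matrix.one_mul, Matrix.mul_one]
        _ = (P * Pi) * X * (Pi * P) := by rw [hPPi, hPiP]
        _ = P * (Pi * X * Pi) * P := by simp only [Matrix.mul_assoc]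
  rw [final]
  have h := mW.conjTranspose_mul_mul_same P
  rwa [hTpsd.posSemidef_sqrt.1.eq] at h

end QDAuxD

namespace QDAuxE
open QDAux

variable {n : Type*} [Fintype n] [DecidableEq n]

lemma kron_left_right (a b : Matrix n n ℂ) :
    (a ⊗ₖ (1 : Matrix n n ℂ)) * ((1 : Matrix n n ℂ) ⊗ₖ b) = a ⊗ₖ b := by
  rw [← Matrix.mul_kronecker_mul, Matrix.mul_one, Matrix.one_mul]

lemma kron_right_left (a b : Matrix n n ℂ) :
    ((1 : Matrix n n ℂ) ⊗ₖ b) * (a ⊗ₖ (1 : Matrix n n ℂ)) = a ⊗ₖ b := by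
  rw [← Matrix.mul_kronecker_mul, Matrix.mul_one, Matrix.one_mul]

lemma trace_quadform (A B H : Matrix n n ℂ) :
    star (fun p : n × n => H p.1 p.2) ⬝ᵥ ((A ⊗ₖ B) *ᵥ fun p : n × n => H p.1 p.2)
      = (Hᴴ * (A * H * Bᵀ)).trace := by
  simp only [dotProduct, Matrix.mulVec, Matrix.trace, Matrix.diag_apply, Matrix.mul_apply,
    Matrix.conjTranspose_apply, Matrix.transpose_apply, Matrix.kroneckerMap_apply,
    Pi.star_apply, Fintype.sum_prod_type, dotProduct, Finset.mul_sum, Finset.sum_mul]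
  rw [Finset.sum_comm]
  apply Finset.sum_congr rfl
  intro i _
  apply Finset.sum_congr rfl
  intro j _
  rw [Finset.sum_comm]
  apply Finset.sum_congr rfl
  intro k _
  apply Finset.sum_congr rfl
  intro l _
  ring_nf

end QDAuxE


namespace QD

section rpowLemmas

variable {n : Type*} [Fintype n] [DecidableEq n]

lemma rpow_eq {σ : Matrix n n ℂ} (h : σ.IsHermitian) (r : ℝ) :
    rpow σ r = (h.eigenvectorUnitary : Matrix n n ℂ) *
      Matrix.diagonal (fun i => ((h.eigenvalues i ^ r : ℝ) : ℂ)) *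
      (h.eigenvectorUnitary : Matrix n n ℂ)ᴴ := by
  rw [rpow, dif_pos h]

lemma rpow_isHermitian {σ : Matrix n n ℂ} (h : σ.IsHermitian) (r : ℝ) :
    (rpow σ r).IsHermitian := by
  rw [rpow_eq h r]
  exact QDAux.conj_diag_isHermitian h _

lemma rpow_posSemidef {σ : Matrix n n ℂ} (h : σ.PosDef) (r : ℝ) :
    (rpow σ r).PosSemidef := by
  rw [rpow_eq h.1 r]
  exact QDAux.conj_diag_posSemidef h.1 fun i => Real.rpow_nonneg (h.eigenvalues_pos i).le r

lemma rpow_mul_rpow {σ : Matrix n n ℂ} (h : σ.PosDef) (a b : ℝ) :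
    rpow σ a * rpow σ b = rpow σ (a + b) := by
  rw [rpow_eq h.1, rpow_eq h.1, rpow_eq h.1, QDAux.conj_mul (QDAux.star_unit h.1),
    Matrix.diagonal_mul_diagonal]
  have hfun : (fun i => ((h.1.eigenvalues i ^ a : ℝ) : ℂ) * ((h.1.eigenvalues i ^ b : ℝ) : ℂ))
      = fun i => ((h.1.eigenvalues i ^ (a + b) : ℝ) : ℂ) := by
    funext i
    rw [← Complex.ofReal_mul, ← Real.rpow_add (h.eigenvalues_pos i)]
  rw [hfun]

lemma rpow_zero' {σ : Matrix n n ℂ} (h : σ.IsHermitian) : rpow σ 0 = 1 := by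
  rw [rpow_eq h]
  have hfun : (fun i => ((h.eigenvalues i ^ (0 : ℝ) : ℝ) : ℂ)) = fun _ => (1 : ℂ) := by
    funext i
    rw [Real.rpow_zero]
    norm_num
  rw [hfun, Matrix.diagonal_one, Matrix.mul_one]
  exact QDAux.unit_star h

lemma rpow_one' {σ : Matrix n n ℂ} (h : σ.IsHermitian) : rpow σ 1 = σ := by
  rw [rpow_eq h]
  have hfun : (fun i => ((h.eigenvalues i ^ (1 : ℝ) : ℝ) : ℂ))
      = fun i => ((h.eigenvalues i : ℝ) : ℂ) := by
    funext i
    rw [Real.rpow_one]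
  rw [hfun]
  exact (QDAux.spectral' h).symm

end rpowLemmas


section mainLemmas

variable {n : Type*} [Fintype n] [DecidableEq n]

/-- The key trace concavity (Lieb concavity at 1/2 via Ando's argument). -/
lemma keyC {σ₁ σ₂ : Matrix n n ℂ}
    (hσ₁ : σ₁.PosDef) (hσ₂ : σ₂.PosDef) {t : ℝ} (ht0 : 0 ≤ t) (ht1 : t ≤ 1)
    (hσt : ((t : ℂ) • σ₁ + ((1 - t : ℝ) : ℂ) • σ₂).PosDef)
    {H : Matrix n n ℂ} (hH : H.IsHermitian) :
    t * (H * rpow σ₁ (1/2 : ℝ) * H * rpow σ₁ (1/2 : ℝ)).trace.re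
      + (1 - t) * (H * rpow σ₂ (1/2 : ℝ) * H * rpow σ₂ (1/2 : ℝ)).trace.re
      ≤ (H * rpow ((t : ℂ) • σ₁ + ((1 - t : ℝ) : ℂ) • σ₂) (1/2 : ℝ) * H
          * rpow ((t : ℂ) • σ₁ + ((1 - t : ℝ) : ℂ) • σ₂) (1/2 : ℝ)).trace.re := by
  set σ : Matrix n n ℂ := (t : ℂ) • σ₁ + ((1 - t : ℝ) : ℂ) • σ₂ with hσdef
  set Sh : Matrix n n ℂ := rpow σ (1/2 : ℝ) with hSh
  set Sh₁ : Matrix n n ℂ := rpow σ₁ (1/2 : ℝ) with hSh₁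
  set Sh₂ : Matrix n n ℂ := rpow σ₂ (1/2 : ℝ) with hSh₂
  have hsq : ∀ {τ : Matrix n n ℂ} (hτ : τ.PosDef), rpow τ (1/2 : ℝ) * rpow τ (1/2 : ℝ) = τ :=
    fun {τ} hτ => by
      rw [rpow_mul_rpow hτ, show ((1/2 : ℝ) + (1/2 : ℝ)) = (1 : ℝ) by norm_num, rpow_one' hτ.1]
  have hΦsq : ∀ {τ : Matrix n n ℂ} (hτ : τ.PosDef),
      (rpow τ (1/2 : ℝ) ⊗ₖ (rpow τ (1/2 : ℝ))ᵀ) ^ 2 = τ ⊗ₖ τᵀ := fun {τ} hτ => by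
    rw [pow_two, ← Matrix.mul_kronecker_mul, hsq hτ, ← Matrix.transpose_mul, hsq hτ]
  have hΦpsd : ∀ {τ : Matrix n n ℂ} (hτ : τ.PosDef),
      (rpow τ (1/2 : ℝ) ⊗ₖ (rpow τ (1/2 : ℝ))ᵀ).PosSemidef := fun {τ} hτ =>
    QDAux.posSemidef_kronecker (rpow_posSemidef hτ _) (rpow_posSemidef hτ _).transpose
  have hTdec : σ ⊗ₖ (1 : Matrix n n ℂ)
      = (t : ℂ) • (σ₁ ⊗ₖ (1 : Matrix n n ℂ)) + ((1 - t : ℝ) : ℂ) • (σ₂ ⊗ₖ (1 : Matrix n n ℂ)) := by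
    rw [hσdef, Matrix.add_kronecker, Matrix.smul_kronecker, Matrix.smul_kronecker]
  have hSdec : (1 : Matrix n n ℂ) ⊗ₖ σᵀ
      = (t : ℂ) • ((1 : Matrix n n ℂ) ⊗ₖ σ₁ᵀ) + ((1 - t : ℝ) : ℂ) • ((1 : Matrix n n ℂ) ⊗ₖ σ₂ᵀ) := by
    rw [hσdef, Matrix.transpose_add, Matrix.transpose_smul, Matrix.transpose_smul,
      Matrix.kronecker_add, Matrix.kronecker_smul, Matrix.kronecker_smul]
  have hM := QDAuxD.ando_key
    (T₁ := σ₁ ⊗ₖ (1 : Matrix n n ℂ)) (T₂ := σ₂ ⊗ₖ (1 : Matrix n n ℂ))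
    (S₁ := (1 : Matrix n n ℂ) ⊗ₖ σ₁ᵀ) (S₂ := (1 : Matrix n n ℂ) ⊗ₖ σ₂ᵀ)
    (QDAux.posSemidef_kronecker hσ₁.posSemidef Matrix.PosSemidef.one)
    (QDAux.posSemidef_kronecker hσ₂.posSemidef Matrix.PosSemidef.one)
    (QDAux.posSemidef_kronecker Matrix.PosSemidef.one hσ₁.posSemidef.transpose)
    (QDAux.posSemidef_kronecker Matrix.PosSemidef.one hσ₂.posSemidef.transpose)
    (by rw [QDAuxE.kron_left_right, QDAuxE.kron_right_left])
    (by rw [QDAuxE.kron_left_right, QDAuxE.kron_right_left])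
    ht0 ht1
    (by rw [← hTdec]; exact QDAux.posDef_kronecker hσt Matrix.PosDef.one)
    (G := Sh ⊗ₖ Shᵀ) (G₁ := Sh₁ ⊗ₖ Sh₁ᵀ) (G₂ := Sh₂ ⊗ₖ Sh₂ᵀ)
    (hΦpsd hσt) (hΦpsd hσ₁) (hΦpsd hσ₂)
    (by rw [← hTdec, ← hSdec, QDAuxE.kron_left_right, QDAuxE.kron_right_left])
    (by rw [← hTdec, ← hSdec, QDAuxE.kron_left_right]; exact hΦsq hσt)
    (by rw [QDAuxE.kron_left_right]; exact hΦsq hσ₁)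
    (by rw [QDAuxE.kron_left_right]; exact hΦsq hσ₂)
  set v : n × n → ℂ := fun p => H p.1 p.2 with hv
  have hq := hM.dotProduct_mulVec_nonneg v
  rw [Matrix.sub_mulVec, Matrix.add_mulVec, Matrix.smul_mulVec,
    Matrix.smul_mulVec, dotProduct_sub, dotProduct_add, dotProduct_smul,
    dotProduct_smul, smul_eq_mul, smul_eq_mul, QDAuxE.trace_quadform, QDAuxE.trace_quadform,
    QDAuxE.trace_quadform, Matrix.transpose_transpose, Matrix.transpose_transpose,
    Matrix.transpose_transpose, hH.eq] at hq
  have hre := (Complex.le_def.mp hq).1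
  rw [Complex.zero_re, Complex.sub_re, Complex.add_re, Complex.re_ofReal_mul,
    Complex.re_ofReal_mul] at hre
  have hassoc : ∀ (X Y : Matrix n n ℂ), X * (Y * X * Y) = X * Y * X * Y := fun X Y => by
    simp only [Matrix.mul_assoc]
  rw [hassoc H Sh, hassoc H Sh₁, hassoc H Sh₂] at hre
  linarith

lemma expD2_eq {σ : Matrix n n ℂ} (ρ : Matrix n n ℂ) (hσ : σ.PosDef) :
    expD2 ρ σ = (ρ * rpow σ (-(1/2) : ℝ) * ρ * rpow σ (-(1/2) : ℝ)).trace.re := by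
  unfold expD2
  set Q : Matrix n n ℂ := rpow σ (-(1/4 : ℝ)) with hQ
  set Si : Matrix n n ℂ := rpow σ (-(1/2) : ℝ) with hSi
  have hQQ : Q * Q = Si := by
    rw [hQ, hSi, rpow_mul_rpow hσ]
    norm_num
  have h1 : (Q * ρ * Q) ^ 2 = Q * (ρ * (Si * (ρ * Q))) := by
    rw [pow_two]
    calc Q * ρ * Q * (Q * ρ * Q) = Q * (ρ * ((Q * Q) * (ρ * Q))) := by
          simp only [Matrix.mul_assoc]
      _ = Q * (ρ * (Si * (ρ * Q))) := by rw [hQQ]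
  rw [h1, Matrix.trace_mul_comm]
  have h2 : (ρ * (Si * (ρ * Q))) * Q = ρ * Si * ρ * Si := by
    calc (ρ * (Si * (ρ * Q))) * Q = ρ * (Si * (ρ * (Q * Q))) := by simp only [Matrix.mul_assoc]
      _ = ρ * (Si * (ρ * Si)) := by rw [hQQ]
      _ = ρ * Si * ρ * Si := by simp only [Matrix.mul_assoc]
  rw [h2]

lemma lemB {σ ρ H : Matrix n n ℂ} (hσ : σ.PosDef) (hρ : ρ.IsHermitian) (hH : H.IsHermitian) :
    2 * (ρ * H).trace.re - (H * rpow σ (1/2 : ℝ) * H * rpow σ (1/2 : ℝ)).trace.re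
      ≤ expD2 ρ σ := by
  set F : Matrix n n ℂ := rpow σ (1/4 : ℝ) with hF
  set Q : Matrix n n ℂ := rpow σ (-(1/4 : ℝ)) with hQ
  set Sh : Matrix n n ℂ := rpow σ (1/2 : ℝ) with hSh
  have hFherm := rpow_isHermitian hσ.1 (1/4 : ℝ)
  have hQherm := rpow_isHermitian hσ.1 (-(1/4 : ℝ))
  have hFF : F * F = Sh := by rw [hF, hSh, rpow_mul_rpow hσ]; norm_num
  have hFQ : F * Q = 1 := by
    rw [hF, hQ, rpow_mul_rpow hσ, show ((1/4 : ℝ) + -(1/4 : ℝ)) = 0 by norm_num,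
      rpow_zero' hσ.1]
  have hQF : Q * F = 1 := by
    rw [hF, hQ, rpow_mul_rpow hσ, show ((-(1/4 : ℝ)) + (1/4 : ℝ)) = 0 by norm_num,
      rpow_zero' hσ.1]
  set G : Matrix n n ℂ := F * H * F - Q * ρ * Q with hG
  have hGherm : G.IsHermitian := by
    apply Matrix.IsHermitian.sub
    · have h := Matrix.isHermitian_mul_mul_conjTranspose F hH
      rwa [hFherm.eq] at h
    · have h := Matrix.isHermitian_mul_mul_conjTranspose Q hρ
      rwa [hQherm.eq] at h
  have h0 : 0 ≤ (Gᴴ * G).trace.re :=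
    QDAuxC.trace_re_nonneg (Matrix.posSemidef_conjTranspose_mul_self G)
  rw [hGherm.eq] at h0
  have hexp : G * G = (F*H*F)*(F*H*F) - (F*H*F)*(Q*ρ*Q)
      - ((Q*ρ*Q)*(F*H*F) - (Q*ρ*Q)*(Q*ρ*Q)) := by
    rw [hG, Matrix.sub_mul, Matrix.mul_sub, Matrix.mul_sub]
  have t1 : ((F*H*F)*(F*H*F)).trace = (H * Sh * H * Sh).trace := by
    have e : (F*H*F)*(F*H*F) = F * (H * (Sh * (H * F))) := by
      calc (F*H*F)*(F*H*F) = F * (H * ((F * F) * (H * F))) := by simp only [Matrix.mul_assoc]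
        _ = F * (H * (Sh * (H * F))) := by rw [hFF]
    rw [e, Matrix.trace_mul_comm]
    have e2 : (H * (Sh * (H * F))) * F = H * Sh * H * Sh := by
      calc (H * (Sh * (H * F))) * F = H * (Sh * (H * (F * F))) := by simp only [Matrix.mul_assoc]
        _ = H * (Sh * (H * Sh)) := by rw [hFF]
        _ = H * Sh * H * Sh := by simp only [Matrix.mul_assoc]
    rw [e2]
  have t2 : ((F*H*F)*(Q*ρ*Q)).trace = (ρ * H).trace := by
    have e : (F*H*F)*(Q*ρ*Q) = F * (H * (ρ * Q)) := by
      calc (F*H*F)*(Q*ρ*Q) = F * (H * ((F * Q) * (ρ * Q))) := by simp only [Matrix.mul_assoc]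
        _ = F * (H * ((1 : Matrix n n ℂ) * (ρ * Q))) := by rw [hFQ]
        _ = F * (H * (ρ * Q)) := by rw [Matrix.one_mul]
    rw [e, Matrix.trace_mul_comm]
    have e2 : (H * (ρ * Q)) * F = H * ρ := by
      calc (H * (ρ * Q)) * F = H * (ρ * (Q * F)) := by simp only [Matrix.mul_assoc]
        _ = H * (ρ * (1 : Matrix n n ℂ)) := by rw [hQF]
        _ = H * ρ := by rw [Matrix.mul_one]
    rw [e2, Matrix.trace_mul_comm]
  have t3 : ((Q*ρ*Q)*(F*H*F)).trace = (ρ * H).trace := by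
    have e : (Q*ρ*Q)*(F*H*F) = Q * (ρ * (H * F)) := by
      calc (Q*ρ*Q)*(F*H*F) = Q * (ρ * ((Q * F) * (H * F))) := by simp only [Matrix.mul_assoc]
        _ = Q * (ρ * ((1 : Matrix n n ℂ) * (H * F))) := by rw [hQF]
        _ = Q * (ρ * (H * F)) := by rw [Matrix.one_mul]
    rw [e, Matrix.trace_mul_comm]
    have e2 : (ρ * (H * F)) * Q = ρ * H := by
      calc (ρ * (H * F)) * Q = ρ * (H * (F * Q)) := by simp only [Matrix.mul_assoc]
        _ = ρ * (H * (1 : Matrix n n ℂ)) := by rw [hFQ]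
        _ = ρ * H := by rw [Matrix.mul_one]
    rw [e2]
  have t4 : ((Q*ρ*Q)*(Q*ρ*Q)).trace.re = expD2 ρ σ := by
    unfold expD2
    rw [pow_two]
  rw [hexp, Matrix.trace_sub, Matrix.trace_sub, Matrix.trace_sub, t1, t2, t3,
    Complex.sub_re, Complex.sub_re, Complex.sub_re] at h0
  rw [← t4] at *
  linarith

end mainLemmas


/-- **Joint convexity of the exponential collision divergence** (Lemma 6 in the paper). -/
theorem expD2_jointly_convex
    (d : ℕ) (ρ₁ ρ₂ σ₁ σ₂ : Matrix (Fin d) (Fin d) ℂ)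
    (hρ₁ : ρ₁.PosSemidef) (hρ₂ : ρ₂.PosSemidef) (hσ₁ : σ₁.PosDef) (hσ₂ : σ₂.PosDef)
    (t : ℝ) (ht0 : 0 ≤ t) (ht1 : t ≤ 1) :
    expD2 ((t : ℂ) • ρ₁ + ((1 - t : ℝ) : ℂ) • ρ₂) ((t : ℂ) • σ₁ + ((1 - t : ℝ) : ℂ) • σ₂) ≤
      t * expD2 ρ₁ σ₁ + (1 - t) * expD2 ρ₂ σ₂ := by
  set σ : Matrix (Fin d) (Fin d) ℂ := (t : ℂ) • σ₁ + ((1 - t : ℝ) : ℂ) • σ₂ with hσdef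
  set ρ : Matrix (Fin d) (Fin d) ℂ := (t : ℂ) • ρ₁ + ((1 - t : ℝ) : ℂ) • ρ₂ with hρdef
  have hσ : σ.PosDef := by
    rcases eq_or_lt_of_le ht0 with h0 | h0
    · rw [hσdef, ← h0]
      simp only [Complex.ofReal_zero, zero_smul, zero_add, sub_zero, Complex.ofReal_one,
        one_smul]
      exact hσ₂
    · exact (QDAux.posDef_smul hσ₁ h0).add_posSemidef
        (QDAux.posSemidef_smul hσ₂.posSemidef (by linarith))
  have hρ : ρ.PosSemidef :=
    (QDAux.posSemidef_smul hρ₁ ht0).add (QDAux.posSemidef_smul hρ₂ (by linarith))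
  set Si : Matrix (Fin d) (Fin d) ℂ := rpow σ (-(1/2) : ℝ) with hSi
  set Sh : Matrix (Fin d) (Fin d) ℂ := rpow σ (1/2 : ℝ) with hSh
  have hSiherm : Si.IsHermitian := rpow_isHermitian hσ.1 _
  have hSiSh : Si * Sh = 1 := by
    rw [hSi, hSh, rpow_mul_rpow hσ, show ((-(1/2) : ℝ) + (1/2 : ℝ)) = 0 by norm_num,
      rpow_zero' hσ.1]
  set H : Matrix (Fin d) (Fin d) ℂ := Si * ρ * Si with hH
  have hHherm : H.IsHermitian := by
    have h := Matrix.isHermitian_mul_mul_conjTranspose Si hρ.1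
    rwa [hSiherm.eq] at h
  have e1 : (ρ * H).trace.re = expD2 ρ σ := by
    rw [expD2_eq ρ hσ]
    have : ρ * H = ρ * Si * ρ * Si := by rw [hH]; simp only [Matrix.mul_assoc]
    rw [this]
  have e2 : (H * Sh * H * Sh).trace.re = expD2 ρ σ := by
    rw [expD2_eq ρ hσ]
    have e : H * Sh * H * Sh = Si * (ρ * (Si * ρ)) := by
      calc H * Sh * H * Sh
          = Si * (ρ * ((Si * Sh) * (Si * (ρ * (Si * Sh))))) := by
            rw [hH]; simp only [Matrix.mul_assoc]
        _ = Si * (ρ * ((1 : Matrix (Fin d) (Fin d) ℂ)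
              * (Si * (ρ * (1 : Matrix (Fin d) (Fin d) ℂ))))) := by rw [hSiSh]
        _ = Si * (ρ * (Si * ρ)) := by rw [Matrix.one_mul, Matrix.mul_one]
    rw [e, Matrix.trace_mul_comm]
    have e' : (ρ * (Si * ρ)) * Si = ρ * Si * ρ * Si := by simp only [Matrix.mul_assoc]
    rw [e']
  have edec : (ρ * H).trace.re = t * (ρ₁ * H).trace.re + (1 - t) * (ρ₂ * H).trace.re := by
    rw [hρdef, Matrix.add_mul, smul_mul_assoc, smul_mul_assoc, Matrix.trace_add,
      Matrix.trace_smul, Matrix.trace_smul, Complex.add_re, smul_eq_mul, smul_eq_mul,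
      Complex.re_ofReal_mul, Complex.re_ofReal_mul]
  have hC := keyC hσ₁ hσ₂ ht0 ht1 hσ hHherm
  have hB1 := lemB hσ₁ hρ₁.1 hHherm
  have hB2 := lemB hσ₂ hρ₂.1 hHherm
  have hB1' := mul_le_mul_of_nonneg_left hB1 ht0
  have hB2' := mul_le_mul_of_nonneg_left hB2 (by linarith : (0:ℝ) ≤ 1 - t)
  have hmain : expD2 ρ σ = 2 * (ρ * H).trace.re - (H * Sh * H * Sh).trace.re := by
    rw [e1, e2]; ring
  rw [hmain, edec]
  nlinarith [hC, hB1', hB2']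

end QD
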